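/- Let $\bar\rho:[0,R]\to\mathbb R$ be $C^2$ and $\chi:[0,R]\to\mathbb R$ be $C^2$ with $\chi'(R)=0$, and let $l\ge 1$. Suppose $\bar\rho$ satisfies $\gamma(r^2\bar\rho^{\gamma-2}\bar\rho')' + 4\pi r^2\bar\rho = 0$. Then, assuming all boundary terms at $r=0$ vanish, the identity $\int_0^R\big(\gamma\bar\rho^{\gamma-2}((\bar\rho\chi)')^2 - 4\pi(\bar\rho\chi)^2\big)r^{2l}\,dr - \gamma\bar\rho'(R)\chi(R)^2 R^{2l} = \int_0^R\big(\gamma\bar\rho^\gamma(\chi')^2 r^{2l} - 2(l-1)(\bar\rho^\gamma)'\chi^2 r^{2l-1}\big)dr$ holds. -/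

import Mathlib

open Real Set Filter
open scoped Topology

private lemma key_algebra (γ pi r ρr dρr χr dχr q M : ℝ) (m : ℕ) (hr : r ≠ 0) :
    -(4*pi*r^2*ρr) * (r^(2*m) * (ρr * χr^2))
      + (γ*(r^2*(q*dρr))) * ((2*M)*r^(2*m)/r * (ρr*χr^2) + r^(2*m) * (dρr*χr^2 + ρr*(2*χr*dχr)))
    = (γ*q*(dρr*χr + ρr*dχr)^2 - 4*pi*(ρr*χr)^2) * r^(2*(m+1))
      - (γ*(q*ρr^2)*dχr^2*r^(2*(m+1)) - 2*M*(γ*(q*ρr)*dρr)*χr^2*r^(2*m+1)) := by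
  field_simp
  ring

theorem mode_energy_integration_by_parts
    (R γ : ℝ) (hR : 0 < R) (l : ℕ) (hl : 1 ≤ l)
    (ρ χ : ℝ → ℝ)
    (hρ : ContDiffOn ℝ 2 ρ (Icc 0 R)) (hχ : ContDiffOn ℝ 2 χ (Icc 0 R))
    (hρpos : ∀ r ∈ Icc (0:ℝ) R, 0 < ρ r) (hρR : ρ R = 1)
    (hχR : deriv χ R = 0)
    (hODE : ∀ r ∈ Ioc (0:ℝ) R,
      deriv (fun s => γ * (s ^ 2 * (ρ s ^ (γ - 2) * deriv ρ s))) r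
        + 4 * π * r ^ 2 * ρ r = 0)
    (hbdry : Tendsto (fun r => r ^ (2 * l) * ρ r ^ (γ - 1) * deriv ρ r * χ r ^ 2)
      (nhdsWithin 0 (Ioi 0)) (nhds 0)) :
    (∫ r in (0:ℝ)..R,
        (γ * ρ r ^ (γ - 2) * (deriv (fun s => ρ s * χ s) r) ^ 2
          - 4 * π * (ρ r * χ r) ^ 2) * r ^ (2 * l))
      - γ * deriv ρ R * χ R ^ 2 * R ^ (2 * l)
    = ∫ r in (0:ℝ)..R,
        (γ * ρ r ^ γ * (deriv χ r) ^ 2 * r ^ (2 * l)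
          - 2 * ((l : ℝ) - 1) * deriv (fun s => ρ s ^ γ) r * χ r ^ 2 * r ^ (2 * l - 1 : ℤ)) := by
  obtain ⟨m, rfl⟩ : ∃ m, l = m + 1 := ⟨l - 1, (Nat.succ_pred_eq_of_pos hl).symm⟩
  clear hl
  -- eliminate the zpow
  have hzpow : ∀ x : ℝ, x ^ (2 * ((m:ℕ)+1 : ℕ) - 1 : ℤ) = x ^ (2*m+1) := by
    intro x
    rw [show (2 * (((m:ℕ)+1 : ℕ) : ℤ) - 1) = ((2*m+1 : ℕ) : ℤ) by push_cast; ring, zpow_natCast]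
  simp only [hzpow]
  have hπ : (0:ℝ) < π := pi_pos
  -- gamma is nonzero
  have hγ : γ ≠ 0 := by
    intro h
    have h0 := hODE R ⟨hR, le_refl R⟩
    rw [h] at h0
    simp only [zero_mul, deriv_const', zero_add] at h0
    rw [hρR] at h0
    nlinarith [mul_pos (mul_pos (mul_pos (by norm_num : (0:ℝ) < 4) hπ) (pow_pos hR 2)) one_pos]
  set G : ℝ → ℝ := fun s => γ * (s ^ 2 * (ρ s ^ (γ - 2) * deriv ρ s)) with hGdef
  have hGderiv : ∀ r ∈ Ioc (0:ℝ) R, HasDerivAt G (-(4 * π * r ^ 2 * ρ r)) r := by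
    intro r hr
    have h0 := hODE r hr
    have hval : deriv G r = -(4 * π * r ^ 2 * ρ r) := by linarith
    have hpos : (0:ℝ) < 4 * π * r ^ 2 * ρ r :=
      mul_pos (mul_pos (mul_pos (by norm_num) hπ) (pow_pos hr.1 2)) (hρpos r ⟨hr.1.le, hr.2⟩)
    have hdiff : DifferentiableAt ℝ G r := by
      by_contra hd
      rw [deriv_zero_of_not_differentiableAt hd] at hval
      linarith
    have := hdiff.hasDerivAt
    rwa [hval] at this
  -- interior derivatives
  have hρdiff : DifferentiableOn ℝ ρ (Ioo 0 R) :=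
    (hρ.mono Ioo_subset_Icc_self).differentiableOn (by norm_num)
  have hχdiff : DifferentiableOn ℝ χ (Ioo 0 R) :=
    (hχ.mono Ioo_subset_Icc_self).differentiableOn (by norm_num)
  have hρat : ∀ r ∈ Ioo (0:ℝ) R, HasDerivAt ρ (deriv ρ r) r := fun r hr =>
    (((hρdiff r hr).differentiableAt (isOpen_Ioo.mem_nhds hr))).hasDerivAt
  have hχat : ∀ r ∈ Ioo (0:ℝ) R, HasDerivAt χ (deriv χ r) r := fun r hr =>
    (((hχdiff r hr).differentiableAt (isOpen_Ioo.mem_nhds hr))).hasDerivAt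
  -- the integrands
  set f : ℝ → ℝ := fun r =>
    (γ * ρ r ^ (γ - 2) * (deriv (fun s => ρ s * χ s) r) ^ 2
      - 4 * π * (ρ r * χ r) ^ 2) * r ^ (2 * (m+1)) with hfdef
  set g : ℝ → ℝ := fun r =>
    γ * ρ r ^ γ * (deriv χ r) ^ 2 * r ^ (2 * (m+1))
      - 2 * ((↑(m + 1) : ℝ) - 1) * deriv (fun s => ρ s ^ γ) r * χ r ^ 2 * r ^ (2*m+1) with hgdef
  -- F and its derivative
  set F : ℝ → ℝ := fun r => G r * (r ^ (2*m) * (ρ r * χ r ^ 2)) with hFdef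
  have hFderiv : ∀ r ∈ Ioo (0:ℝ) R, HasDerivAt F (f r - g r) r := by
    intro r hr
    have hrne : r ≠ 0 := hr.1.ne'
    have hρr : 0 < ρ r := hρpos r ⟨hr.1.le, hr.2.le⟩
    have hdρ := hρat r hr
    have hdχ := hχat r hr
    have hpow : HasDerivAt (fun x : ℝ => x ^ (2*m)) ((2*(m:ℝ)) * r ^ (2*m) / r) r := by
      have h := hasDerivAt_pow (2*m) r
      refine h.congr_deriv ?_
      rcases Nat.eq_zero_or_pos m with hm | hm
      · subst hm; simp
      · have h1 : r ^ (2*m) = r ^ (2*m - 1) * r := by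
          rw [← pow_succ]; congr 1; omega
        rw [h1, mul_div_assoc, mul_div_cancel_right₀ _ hrne]
        norm_num
      -- end
    have hh : HasDerivAt (fun s => s ^ (2*m) * (ρ s * χ s ^ 2))
        ((2*(m:ℝ)) * r ^ (2*m) / r * (ρ r * χ r ^ 2)
          + r ^ (2*m) * (deriv ρ r * χ r ^ 2 + ρ r * (2 * χ r * deriv χ r))) r := by
      have hχ2 : HasDerivAt (fun s => χ s ^ 2) (2 * χ r * deriv χ r) r := by
        have := hdχ.pow 2
        refine this.congr_deriv ?_
        ring
      exact hpow.mul (hdρ.mul hχ2)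
    have hG := hGderiv r ⟨hr.1, hr.2.le⟩
    have hF := hG.mul hh
    have hmul : deriv (fun s => ρ s * χ s) r = deriv ρ r * χ r + ρ r * deriv χ r :=
      (hdρ.mul hdχ).deriv
    have hrpow : deriv (fun s => ρ s ^ γ) r = γ * ρ r ^ (γ - 1) * deriv ρ r := by
      rw [(hdρ.rpow_const (Or.inl hρr.ne')).deriv]; ring
    have e1 : ρ r ^ (γ - 1) = ρ r ^ (γ - 2) * ρ r := by
      rw [show ρ r ^ (γ - 2) * ρ r = ρ r ^ (γ - 2) * ρ r ^ (1:ℝ) by rw [Real.rpow_one],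
        ← Real.rpow_add hρr]; congr 1; ring
    have e2 : ρ r ^ γ = ρ r ^ (γ - 2) * ρ r ^ 2 := by
      rw [← Real.rpow_natCast (ρ r) 2, ← Real.rpow_add hρr]; congr 1; push_cast; ring
    have hval : f r - g r =
        -(4 * π * r ^ 2 * ρ r) * (r ^ (2*m) * (ρ r * χ r ^ 2))
          + G r * ((2*(m:ℝ)) * r ^ (2*m) / r * (ρ r * χ r ^ 2)
            + r ^ (2*m) * (deriv ρ r * χ r ^ 2 + ρ r * (2 * χ r * deriv χ r))) := by
      rw [hfdef, hgdef, hGdef]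
      simp only [hmul, hrpow, e1, e2]
      have := key_algebra γ π r (ρ r) (deriv ρ r) (χ r) (deriv χ r) (ρ r ^ (γ - 2)) (m:ℝ) m hrne
      rw [show ((↑(m + 1) : ℝ) - 1) = (m:ℝ) by push_cast; ring]
      linarith [this]
    rw [hval]
    exact hF
  -- continuity data for integrability
  have hud : UniqueDiffOn ℝ (Icc (0:ℝ) R) := uniqueDiffOn_Icc hR
  have hdρc : ContinuousOn (derivWithin ρ (Icc 0 R)) (Icc 0 R) :=
    hρ.continuousOn_derivWithin hud one_le_two
  have hdχc : ContinuousOn (derivWithin χ (Icc 0 R)) (Icc 0 R) :=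
    hχ.continuousOn_derivWithin hud one_le_two
  have hρc : ContinuousOn ρ (Icc 0 R) := hρ.continuousOn
  have hχc : ContinuousOn χ (Icc 0 R) := hχ.continuousOn
  have hdW : ∀ r ∈ Ioo (0:ℝ) R, derivWithin ρ (Icc 0 R) r = deriv ρ r ∧
      derivWithin χ (Icc 0 R) r = deriv χ r := by
    intro r hr
    have hmem : Icc (0:ℝ) R ∈ 𝓝 r := Icc_mem_nhds hr.1 hr.2
    exact ⟨derivWithin_of_mem_nhds hmem, derivWithin_of_mem_nhds hmem⟩
  have hρne : ∀ x ∈ Icc (0:ℝ) R, ρ x ≠ 0 ∨ (0:ℝ) ≤ γ - 2 :=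
    fun x hx => Or.inl (hρpos x hx).ne'
  have hρne' : ∀ x ∈ Icc (0:ℝ) R, ρ x ≠ 0 ∨ (0:ℝ) ≤ γ :=
    fun x hx => Or.inl (hρpos x hx).ne'
  have hρne'' : ∀ x ∈ Icc (0:ℝ) R, ρ x ≠ 0 ∨ (0:ℝ) ≤ γ - 1 :=
    fun x hx => Or.inl (hρpos x hx).ne'
  -- integrability of f
  have hf_int : IntervalIntegrable f MeasureTheory.volume 0 R := by
    rw [intervalIntegrable_iff_integrableOn_Ioo_of_le hR.le]
    have hcont : ContinuousOn (fun r =>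
        (γ * ρ r ^ (γ - 2) * (derivWithin ρ (Icc 0 R) r * χ r + ρ r * derivWithin χ (Icc 0 R) r) ^ 2
          - 4 * π * (ρ r * χ r) ^ 2) * r ^ (2 * (m+1))) (Icc 0 R) := by
      apply ContinuousOn.mul
      · apply ContinuousOn.sub
        · exact ((continuousOn_const.mul (hρc.rpow_const hρne)).mul
            (((hdρc.mul hχc).add (hρc.mul hdχc)).pow 2))
        · exact continuousOn_const.mul ((hρc.mul hχc).pow 2)
      · exact (continuous_pow _).continuousOn
    refine ((hcont.integrableOn_Icc).mono_set Ioo_subset_Icc_self).congr_fun ?_ measurableSet_Ioo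
    intro r hr
    obtain ⟨e1, e2⟩ := hdW r hr
    have hdρ := hρat r hr
    have hdχ := hχat r hr
    have hmul : deriv (fun s => ρ s * χ s) r = deriv ρ r * χ r + ρ r * deriv χ r :=
      (hdρ.mul hdχ).deriv
    simp only [hfdef, e1, e2, hmul]
  -- integrability of g
  have hg_int : IntervalIntegrable g MeasureTheory.volume 0 R := by
    rw [intervalIntegrable_iff_integrableOn_Ioo_of_le hR.le]
    have hcont : ContinuousOn (fun r =>
        γ * ρ r ^ γ * (derivWithin χ (Icc 0 R) r) ^ 2 * r ^ (2 * (m+1))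
          - 2 * ((↑(m + 1) : ℝ) - 1) * (γ * ρ r ^ (γ - 1) * derivWithin ρ (Icc 0 R) r)
            * χ r ^ 2 * r ^ (2*m+1)) (Icc 0 R) := by
      apply ContinuousOn.sub
      · exact (((continuousOn_const.mul (hρc.rpow_const hρne')).mul (hdχc.pow 2)).mul
          ((continuous_pow _).continuousOn))
      · exact ((((continuousOn_const.mul ((continuousOn_const.mul
          (hρc.rpow_const hρne'')).mul hdρc))).mul (hχc.pow 2)).mul ((continuous_pow _).continuousOn))
    refine ((hcont.integrableOn_Icc).mono_set Ioo_subset_Icc_self).congr_fun ?_ measurableSet_Ioo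
    intro r hr
    obtain ⟨e1, e2⟩ := hdW r hr
    have hdρ := hρat r hr
    have hρr : 0 < ρ r := hρpos r ⟨hr.1.le, hr.2.le⟩
    have hrpow : deriv (fun s => ρ s ^ γ) r = γ * ρ r ^ (γ - 1) * deriv ρ r := by
      rw [(hdρ.rpow_const (Or.inl hρr.ne')).deriv]; ring
    simp only [hgdef, e1, e2, hrpow]
  have hφ_int : IntervalIntegrable (fun r => f r - g r) MeasureTheory.volume 0 R :=
    hf_int.sub hg_int
  -- limit at 0
  have h0lim : Tendsto F (𝓝[>] (0:ℝ)) (𝓝 0) := by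
    have h1 : Tendsto (fun r => γ * (r ^ (2 * (m+1)) * ρ r ^ (γ - 1) * deriv ρ r * χ r ^ 2))
        (𝓝[>] (0:ℝ)) (𝓝 (γ * 0)) := hbdry.const_mul γ
    rw [mul_zero] at h1
    refine h1.congr' ?_
    filter_upwards [Ioo_mem_nhdsGT hR] with r hr
    have hρr : 0 < ρ r := hρpos r ⟨hr.1.le, hr.2.le⟩
    have e1 : ρ r ^ (γ - 1) = ρ r ^ (γ - 2) * ρ r := by
      rw [show ρ r ^ (γ - 2) * ρ r = ρ r ^ (γ - 2) * ρ r ^ (1:ℝ) by rw [Real.rpow_one],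
        ← Real.rpow_add hρr]; congr 1; ring
    rw [hFdef, hGdef]
    simp only [e1]
    ring
  -- limit at R
  have hRlim : Tendsto F (𝓝[<] R) (𝓝 (γ * deriv ρ R * χ R ^ 2 * R ^ (2 * (m+1)))) := by
    have hGR := hGderiv R ⟨hR, le_refl R⟩
    have hGcont : ContinuousAt G R := hGR.differentiableAt.continuousAt
    have hh2 : ContinuousWithinAt (fun r => r ^ (2*m) * (ρ r * χ r ^ 2)) (Icc 0 R) R := by
      exact (((continuous_pow _).continuousOn).mul (hρc.mul (hχc.pow 2))) R (right_mem_Icc.mpr hR.le)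
    have h2t : Tendsto (fun r => r ^ (2*m) * (ρ r * χ r ^ 2)) (𝓝[<] R)
        (𝓝 (R ^ (2*m) * (ρ R * χ R ^ 2))) := by
      have := hh2.tendsto
      refine this.mono_left ?_
      rw [nhdsWithin_le_iff]
      filter_upwards [Ioo_mem_nhdsLT_of_mem (Set.mem_Ioc.mpr ⟨hR, le_refl R⟩)] with x hx
      exact Ioo_subset_Icc_self hx
    have hGt : Tendsto G (𝓝[<] R) (𝓝 (G R)) := hGcont.continuousWithinAt.tendsto
    have := hGt.mul h2t
    have hval : G R * (R ^ (2*m) * (ρ R * χ R ^ 2))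
        = γ * deriv ρ R * χ R ^ 2 * R ^ (2 * (m+1)) := by
      simp only [hGdef, hρR, Real.one_rpow]
      ring
    rwa [hval] at this
  -- FTC
  have key := intervalIntegral.integral_eq_sub_of_hasDerivAt_of_tendsto hR hFderiv hφ_int
      h0lim hRlim
  have hsub := intervalIntegral.integral_sub hf_int hg_int
  rw [hsub] at key
  linarith [key]
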